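/- (Simultaneous Mass Siphoning.) Let C be a condensed configuration of n regions on ℝ with density |x|, and suppose there are two regions A and B, each consisting of exactly two intervals A⁻, A⁺ and B⁻, B⁺, which appear in the alternating left-to-right order A⁻, B⁻, A⁺, B⁺ (i.e. sup A⁻ ≤ inf B⁻, sup B⁻ ≤ inf A⁺, and sup A⁺ ≤ inf B⁺). Then there exists a configuration of n regions with the same list of weighted masses whose total weighted perimeter is strictly smaller than that of C. -/

import Mathlib

open MeasureTheory Finset

/-- A configuration of `n` regions made of `k` nondegenerate closed intervals
with pairwise disjoint interiors, each interval labeled by one of the regions. -/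
structure Config (n k : ℕ) where
  lo : Fin k → ℝ
  hi : Fin k → ℝ
  lab : Fin k → Fin n
  nondeg : ∀ j, lo j < hi j
  disj : ∀ i j, i ≠ j → Set.Ioo (lo i) (hi i) ∩ Set.Ioo (lo j) (hi j) = ∅

namespace Config

variable {n k : ℕ}

/-- Weighted mass of region `i` with respect to the density `|x|`. -/
noncomputable def mass (C : Config n k) (i : Fin n) : ℝ :=
  ∑ j ∈ univ.filter (fun j => C.lab j = i), ∫ x in C.lo j..C.hi j, |x|

/-- The (finite) set of all endpoints of intervals of the configuration. -/
noncomputable def endpointSet (C : Config n k) : Finset ℝ :=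
  image C.lo univ ∪ image C.hi univ

/-- Total weighted perimeter with respect to the density `|x|`. -/
noncomputable def perim (C : Config n k) : ℝ :=
  ∑ x ∈ C.endpointSet, |x|

/-- A configuration is condensed if the union of its intervals is a closed interval
containing `0` and each region has at most one interval contained in `(-∞,0]`
and at most one interval contained in `[0,∞)`. -/
def Condensed (C : Config n k) : Prop :=
  (∃ a b : ℝ, a ≤ 0 ∧ 0 ≤ b ∧ (⋃ j, Set.Icc (C.lo j) (C.hi j)) = Set.Icc a b) ∧
  ∀ i : Fin n,
    (univ.filter (fun j => C.lab j = i ∧ C.hi j ≤ 0)).card ≤ 1 ∧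
    (univ.filter (fun j => C.lab j = i ∧ 0 ≤ C.lo j)).card ≤ 1

/-- A configuration is isoperimetric if its total weighted perimeter is least among all
configurations of `n` regions with the same list of weighted masses. -/
def Isoperimetric (C : Config n k) : Prop :=
  ∀ (k' : ℕ) (C' : Config n k'), (∀ i, C'.mass i = C.mass i) → C.perim ≤ C'.perim

end Config

lemma hasDerivAt_halfSq (x : ℝ) : HasDerivAt (fun y : ℝ => y * |y| / 2) |x| x := by
  rcases lt_trichotomy x 0 with hx | rfl | hx
  · have h : HasDerivAt (fun y : ℝ => -(y * y) / 2) (-x) x := by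
      have := ((hasDerivAt_id x).mul (hasDerivAt_id x)).neg.div_const 2
      simpa using this.congr_deriv (by simp)
    have heq : (fun y : ℝ => y * |y| / 2) =ᶠ[nhds x] (fun y : ℝ => -(y * y) / 2) := by
      filter_upwards [(isOpen_Iio (a := (0:ℝ))).eventually_mem hx] with y hy
      rw [abs_of_neg hy]; ring
    rw [abs_of_neg hx]
    exact h.congr_of_eventuallyEq heq
  · rw [abs_zero, hasDerivAt_iff_tendsto_slope]
    have h : Filter.Tendsto (fun y : ℝ => |y| / 2) (nhdsWithin 0 {(0:ℝ)}ᶜ) (nhds 0) := by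
      have : Filter.Tendsto (fun y : ℝ => |y| / 2) (nhds 0) (nhds 0) := by
        have := (continuous_abs.div_const 2).tendsto (0:ℝ)
        simpa using this
      exact this.mono_left nhdsWithin_le_nhds
    refine h.congr' ?_
    filter_upwards [self_mem_nhdsWithin] with y hy
    have hy0 : y ≠ 0 := hy
    simp only [slope, sub_zero, abs_zero, mul_zero, zero_mul, zero_div, vsub_eq_sub, smul_eq_mul]
    field_simp
  · have h : HasDerivAt (fun y : ℝ => (y * y) / 2) x x := by
      have := ((hasDerivAt_id x).mul (hasDerivAt_id x)).div_const 2
      simpa using this.congr_deriv (by simp)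
    have heq : (fun y : ℝ => y * |y| / 2) =ᶠ[nhds x] (fun y : ℝ => (y * y) / 2) := by
      filter_upwards [(isOpen_Ioi (a := (0:ℝ))).eventually_mem hx] with y hy
      rw [abs_of_pos hy]
    rw [abs_of_pos hx]
    exact h.congr_of_eventuallyEq heq

lemma integral_abs' (a b : ℝ) : ∫ x in a..b, |x| = b * |b| / 2 - a * |a| / 2 :=
  intervalIntegral.integral_eq_sub_of_hasDerivAt (fun x _ => hasDerivAt_halfSq x)
    (continuous_abs.intervalIntegrable a b)

lemma Config.order {n k : ℕ} (C : Config n k) {i j : Fin k} (h : i ≠ j) :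
    C.hi i ≤ C.lo j ∨ C.hi j ≤ C.lo i := by
  by_contra hc
  push_neg at hc
  obtain ⟨hij, hji⟩ := hc
  have hi1 := C.nondeg i
  have hj1 := C.nondeg j
  have hd := C.disj i j h
  set t := (max (C.lo i) (C.lo j) + min (C.hi i) (C.hi j)) / 2 with ht
  have hmax : max (C.lo i) (C.lo j) < min (C.hi i) (C.hi j) := by
    simp only [max_lt_iff, lt_min_iff]
    exact ⟨⟨hi1, hij⟩, ⟨hji, hj1⟩⟩
  have h1 : t ∈ Set.Ioo (C.lo i) (C.hi i) := by
    constructor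
    · have := le_max_left (C.lo i) (C.lo j); simp only [ht]; linarith
    · have := min_le_left (C.hi i) (C.hi j); simp only [ht]; linarith
  have h2 : t ∈ Set.Ioo (C.lo j) (C.hi j) := by
    constructor
    · have := le_max_right (C.lo i) (C.lo j); simp only [ht]; linarith
    · have := min_le_right (C.hi i) (C.hi j); simp only [ht]; linarith
  have : t ∈ Set.Ioo (C.lo i) (C.hi i) ∩ Set.Ioo (C.lo j) (C.hi j) := ⟨h1, h2⟩
  rw [hd] at this
  exact this

lemma sum_image_le' (s : Finset ℝ) (φ : ℝ → ℝ) (g : ℝ → ℝ) (hg : ∀ x, 0 ≤ g x) :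
    ∑ y ∈ s.image φ, g y ≤ ∑ x ∈ s, g (φ x) := by
  classical
  induction s using Finset.induction_on with
  | empty => simp
  | @insert a s' h ih =>
    rw [Finset.image_insert, Finset.sum_insert h]
    by_cases hmem : φ a ∈ s'.image φ
    · rw [Finset.insert_eq_self.mpr hmem]
      have := hg (φ a)
      linarith
    · rw [Finset.sum_insert hmem]
      linarith


set_option maxHeartbeats 1000000 in
/-- Simultaneous Mass Siphoning: if a condensed configuration contains two regions `A`
and `B`, each made of exactly two intervals appearing in the alternating left-to-right
order `A⁻, B⁻, A⁺, B⁺`, then some configuration with the same list of weighted masses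
has strictly smaller total weighted perimeter. -/
theorem simultaneous_mass_siphoning (n k : ℕ) (C : Config n k) (hC : C.Condensed)
    (A B : Fin n) (hAB : A ≠ B)
    (am ap bm bp : Fin k) (hA : am ≠ ap) (hB : bm ≠ bp)
    (hlabam : C.lab am = A) (hlabap : C.lab ap = A)
    (hlabbm : C.lab bm = B) (hlabbp : C.lab bp = B)
    (honlyA : ∀ j, C.lab j = A → j = am ∨ j = ap)
    (honlyB : ∀ j, C.lab j = B → j = bm ∨ j = bp)
    (h1 : C.hi am ≤ C.lo bm) (h2 : C.hi bm ≤ C.lo ap) (h3 : C.hi ap ≤ C.lo bp) :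
    ∃ (k' : ℕ) (C' : Config n k'),
      (∀ i, C'.mass i = C.mass i) ∧ C'.perim < C.perim := by
  classical
  obtain ⟨-, hcond⟩ := hC
  have na := C.nondeg am
  have nb := C.nondeg bm
  have nc := C.nondeg ap
  have nd := C.nondeg bp
  -- basic position facts
  have hb1neg : C.lo bm < 0 := by
    by_contra hcon
    push_neg at hcon
    have hcard := (hcond B).2
    have hbm : bm ∈ univ.filter (fun j => C.lab j = B ∧ 0 ≤ C.lo j) := by
      simp only [Finset.mem_filter, Finset.mem_univ, true_and]
      exact ⟨hlabbm, hcon⟩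
    have hbp : bp ∈ univ.filter (fun j => C.lab j = B ∧ 0 ≤ C.lo j) := by
      simp only [Finset.mem_filter, Finset.mem_univ, true_and]
      exact ⟨hlabbp, by linarith⟩
    exact hB (Finset.card_le_one.mp hcard bm hbm bp hbp)
  have hc2pos : 0 < C.hi ap := by
    by_contra hcon
    push_neg at hcon
    have hcard := (hcond A).1
    have ham : am ∈ univ.filter (fun j => C.lab j = A ∧ C.hi j ≤ 0) := by
      simp only [Finset.mem_filter, Finset.mem_univ, true_and]
      exact ⟨hlabam, by linarith⟩
    have hap : ap ∈ univ.filter (fun j => C.lab j = A ∧ C.hi j ≤ 0) := by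
      simp only [Finset.mem_filter, Finset.mem_univ, true_and]
      exact ⟨hlabap, hcon⟩
    exact hA (Finset.card_le_one.mp hcard am ham ap hap)
  -- the mass shift δ
  set m1 : ℝ := C.lo bm ^ 2 - (min (C.hi bm) 0) ^ 2 with hm1def
  set m2 : ℝ := C.hi ap ^ 2 - (max (C.lo ap) 0) ^ 2 with hm2def
  have he1lt : C.lo bm < min (C.hi bm) 0 := lt_min nb hb1neg
  have he1le : min (C.hi bm) 0 ≤ 0 := min_le_right _ _
  have he1bm : min (C.hi bm) 0 ≤ C.hi bm := min_le_left _ _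
  have he2lt : max (C.lo ap) 0 < C.hi ap := max_lt nc hc2pos
  have he2le : 0 ≤ max (C.lo ap) 0 := le_max_right _ _
  have he2ap : C.lo ap ≤ max (C.lo ap) 0 := le_max_left _ _
  have hm1pos : 0 < m1 := by rw [hm1def]; nlinarith
  have hm2pos : 0 < m2 := by rw [hm2def]; nlinarith
  set δ : ℝ := min m1 m2 / 4 with hδdef
  have hδpos : 0 < δ := by
    have := lt_min hm1pos hm2pos
    rw [hδdef]; linarith
  have h2δ1 : 2 * δ < m1 := by
    have := min_le_left m1 m2
    have := lt_min hm1pos hm2pos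
    rw [hδdef]; linarith
  have h2δ2 : 2 * δ < m2 := by
    have := min_le_right m1 m2
    have := lt_min hm1pos hm2pos
    rw [hδdef]; linarith
  -- the perturbation map
  set φ : ℝ → ℝ := fun x =>
    if C.hi am ≤ x ∧ x ≤ C.lo bm then -Real.sqrt (x ^ 2 - 2 * δ)
    else if C.hi ap ≤ x ∧ x ≤ C.lo bp then Real.sqrt (x ^ 2 - 2 * δ)
    else x with hφdef
  have vZ1 : ∀ x, C.hi am ≤ x → x ≤ C.lo bm → φ x = -Real.sqrt (x ^ 2 - 2 * δ) := by
    intro x hx1 hx2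
    simp only [hφdef]
    rw [if_pos ⟨hx1, hx2⟩]
  have vZ2 : ∀ x, C.hi ap ≤ x → x ≤ C.lo bp → φ x = Real.sqrt (x ^ 2 - 2 * δ) := by
    intro x hx1 hx2
    have hn : ¬(C.hi am ≤ x ∧ x ≤ C.lo bm) := by rintro ⟨g, g'⟩; linarith
    simp only [hφdef]
    rw [if_neg hn, if_pos ⟨hx1, hx2⟩]
  have vid : ∀ x, (x < C.hi am ∨ (C.hi bm ≤ x ∧ x ≤ C.lo ap) ∨ C.hi bp ≤ x) → φ x = x := by
    intro x hx
    have hn1 : ¬(C.hi am ≤ x ∧ x ≤ C.lo bm) := by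
      rcases hx with h | ⟨h, h'⟩ | h <;> rintro ⟨g, g'⟩ <;> linarith
    have hn2 : ¬(C.hi ap ≤ x ∧ x ≤ C.lo bp) := by
      rcases hx with h | ⟨h, h'⟩ | h <;> rintro ⟨g, g'⟩ <;> linarith
    simp only [hφdef]
    rw [if_neg hn1, if_neg hn2]
  -- bundles of facts on the two moved zones
  have hZ1 : ∀ x, C.hi am ≤ x → x ≤ C.lo bm →
      2 * δ < x ^ 2 ∧ x < φ x ∧ φ x < min (C.hi bm) 0 ∧ |φ x| < |x| ∧
        φ x * |φ x| / 2 = x * |x| / 2 + δ := by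
    intro x hx1 hx2
    have hxneg : x < 0 := lt_of_le_of_lt hx2 hb1neg
    have hx2sq : C.lo bm ^ 2 ≤ x ^ 2 := by nlinarith
    have h2δx : 2 * δ < x ^ 2 := by
      have : (min (C.hi bm) 0) ^ 2 ≥ 0 := sq_nonneg _
      rw [hm1def] at h2δ1
      linarith
    have hspos : 0 < x ^ 2 - 2 * δ := by linarith
    have hv := vZ1 x hx1 hx2
    have hsqrt_lt : Real.sqrt (x ^ 2 - 2 * δ) < -x := by
      rw [Real.sqrt_lt' (by linarith : (0:ℝ) < -x), neg_sq]
      linarith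
    have hsqrt_gt : -(min (C.hi bm) 0) < Real.sqrt (x ^ 2 - 2 * δ) := by
      rw [Real.lt_sqrt (by linarith : (0:ℝ) ≤ -(min (C.hi bm) 0)), neg_sq]
      rw [hm1def] at h2δ1
      linarith
    have hsq : Real.sqrt (x ^ 2 - 2 * δ) * Real.sqrt (x ^ 2 - 2 * δ) = x ^ 2 - 2 * δ :=
      Real.mul_self_sqrt hspos.le
    have hsnn : 0 ≤ Real.sqrt (x ^ 2 - 2 * δ) := Real.sqrt_nonneg _
    refine ⟨h2δx, by rw [hv]; linarith, by rw [hv]; linarith, ?_, ?_⟩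
    · rw [hv, abs_neg, abs_of_nonneg hsnn, abs_of_neg hxneg]; linarith
    · rw [hv, abs_neg, abs_of_nonneg hsnn, abs_of_neg hxneg]
      linear_combination (-1/2 : ℝ) * hsq
  have hZ2 : ∀ x, C.hi ap ≤ x → x ≤ C.lo bp →
      2 * δ < x ^ 2 ∧ max (C.lo ap) 0 < φ x ∧ φ x < x ∧ |φ x| < |x| ∧
        φ x * |φ x| / 2 = x * |x| / 2 - δ := by
    intro x hx1 hx2
    have hxpos : 0 < x := lt_of_lt_of_le hc2pos hx1
    have hx2sq : C.hi ap ^ 2 ≤ x ^ 2 := by nlinarith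
    have h2δx : 2 * δ < x ^ 2 := by
      have : (max (C.lo ap) 0) ^ 2 ≥ 0 := sq_nonneg _
      rw [hm2def] at h2δ2
      linarith
    have hspos : 0 < x ^ 2 - 2 * δ := by linarith
    have hv := vZ2 x hx1 hx2
    have hsqrt_lt : Real.sqrt (x ^ 2 - 2 * δ) < x := by
      rw [Real.sqrt_lt' hxpos]
      linarith
    have hsqrt_gt : max (C.lo ap) 0 < Real.sqrt (x ^ 2 - 2 * δ) := by
      rw [Real.lt_sqrt he2le]
      rw [hm2def] at h2δ2
      linarith
    have hsq : Real.sqrt (x ^ 2 - 2 * δ) * Real.sqrt (x ^ 2 - 2 * δ) = x ^ 2 - 2 * δ :=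
      Real.mul_self_sqrt hspos.le
    have hsnn : 0 ≤ Real.sqrt (x ^ 2 - 2 * δ) := Real.sqrt_nonneg _
    refine ⟨h2δx, by rw [hv]; linarith, by rw [hv]; linarith, ?_, ?_⟩
    · rw [hv, abs_of_nonneg hsnn, abs_of_pos hxpos]; linarith
    · rw [hv, abs_of_nonneg hsnn, abs_of_pos hxpos]
      linear_combination (1/2 : ℝ) * hsq
  -- endpoints avoid the interiors of the four special intervals
  have gap : ∀ (j0 : Fin k) (x : ℝ), (∃ j, C.lo j = x ∨ C.hi j = x) →
      x ≤ C.lo j0 ∨ C.hi j0 ≤ x := by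
    rintro j0 x ⟨j, hj⟩
    rcases eq_or_ne j j0 with rfl | hne
    · rcases hj with rfl | rfl
      · exact Or.inl le_rfl
      · exact Or.inr le_rfl
    · rcases C.order hne with h | h
      · left
        rcases hj with rfl | rfl
        · exact (C.nondeg j).le.trans h
        · exact h
      · right
        rcases hj with rfl | rfl
        · exact h
        · exact h.trans (C.nondeg j).le
  have class5 : ∀ x : ℝ, (∃ j, C.lo j = x ∨ C.hi j = x) →
      x < C.hi am ∨ (C.hi am ≤ x ∧ x ≤ C.lo bm) ∨ (C.hi bm ≤ x ∧ x ≤ C.lo ap) ∨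
        (C.hi ap ≤ x ∧ x ≤ C.lo bp) ∨ C.hi bp ≤ x := by
    intro x hx
    rcases gap bm x hx with h | h
    · rcases lt_or_ge x (C.hi am) with h' | h'
      · exact Or.inl h'
      · exact Or.inr (Or.inl ⟨h', h⟩)
    · rcases gap ap x hx with h' | h'
      · exact Or.inr (Or.inr (Or.inl ⟨h, h'⟩))
      · rcases gap bp x hx with h'' | h''
        · exact Or.inr (Or.inr (Or.inr (Or.inl ⟨h', h''⟩)))
        · exact Or.inr (Or.inr (Or.inr (Or.inr h'')))
  -- strict monotonicity on endpoints
  have hmono : ∀ x y : ℝ, (∃ j, C.lo j = x ∨ C.hi j = x) → (∃ j, C.lo j = y ∨ C.hi j = y) →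
      x < y → φ x < φ y := by
    intro x y hx hy hxy
    rcases class5 x hx with px | ⟨px1, px2⟩ | ⟨px1, px2⟩ | ⟨px1, px2⟩ | px
    · rw [vid x (Or.inl px)]
      rcases class5 y hy with py | ⟨py1, py2⟩ | ⟨py1, py2⟩ | ⟨py1, py2⟩ | py
      · rw [vid y (Or.inl py)]; exact hxy
      · have := (hZ1 y py1 py2).2.1; linarith
      · rw [vid y (Or.inr (Or.inl ⟨py1, py2⟩))]; exact hxy
      · have := (hZ2 y py1 py2).2.1; linarith
      · rw [vid y (Or.inr (Or.inr py))]; exact hxy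
    · obtain ⟨-, hxa, hxb, -, -⟩ := hZ1 x px1 px2
      rcases class5 y hy with py | ⟨py1, py2⟩ | ⟨py1, py2⟩ | ⟨py1, py2⟩ | py
      · linarith
      · have h0 := (hZ1 y py1 py2).1
        rw [vZ1 x px1 px2, vZ1 y py1 py2]
        have hy2 : y ^ 2 - 2 * δ < x ^ 2 - 2 * δ := by nlinarith
        have := Real.sqrt_lt_sqrt (by linarith) hy2
        linarith
      · rw [vid y (Or.inr (Or.inl ⟨py1, py2⟩))]; linarith
      · have := (hZ2 y py1 py2).2.1; linarith
      · rw [vid y (Or.inr (Or.inr py))]; linarith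
    · rw [vid x (Or.inr (Or.inl ⟨px1, px2⟩))]
      rcases class5 y hy with py | ⟨py1, py2⟩ | ⟨py1, py2⟩ | ⟨py1, py2⟩ | py
      · linarith
      · linarith
      · rw [vid y (Or.inr (Or.inl ⟨py1, py2⟩))]; exact hxy
      · have := (hZ2 y py1 py2).2.1; linarith
      · rw [vid y (Or.inr (Or.inr py))]; exact hxy
    · obtain ⟨h0x, hxa, hxb, -, -⟩ := hZ2 x px1 px2
      rcases class5 y hy with py | ⟨py1, py2⟩ | ⟨py1, py2⟩ | ⟨py1, py2⟩ | py
      · linarith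
      · linarith
      · linarith
      · rw [vZ2 x px1 px2, vZ2 y py1 py2]
        have hy2 : x ^ 2 - 2 * δ < y ^ 2 - 2 * δ := by nlinarith
        exact Real.sqrt_lt_sqrt (by linarith) hy2
      · rw [vid y (Or.inr (Or.inr py))]; linarith
    · rw [vid x (Or.inr (Or.inr px))]
      rcases class5 y hy with py | ⟨py1, py2⟩ | ⟨py1, py2⟩ | ⟨py1, py2⟩ | py
      · linarith
      · linarith
      · linarith
      · linarith
      · rw [vid y (Or.inr (Or.inr py))]; exact hxy
  have hmono_le : ∀ x y : ℝ, (∃ j, C.lo j = x ∨ C.hi j = x) → (∃ j, C.lo j = y ∨ C.hi j = y) →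
      x ≤ y → φ x ≤ φ y := by
    intro x y hx hy h
    rcases eq_or_lt_of_le h with rfl | h'
    · exact le_rfl
    · exact (hmono x y hx hy h').le
  have habs : ∀ x : ℝ, (∃ j, C.lo j = x ∨ C.hi j = x) → |φ x| ≤ |x| := by
    intro x hx
    rcases class5 x hx with h | ⟨h, h'⟩ | h | ⟨h, h'⟩ | h
    · rw [vid x (Or.inl h)]
    · exact (hZ1 x h h').2.2.2.1.le
    · rw [vid x (Or.inr (Or.inl h))]
    · exact (hZ2 x h h').2.2.2.1.le
    · rw [vid x (Or.inr (Or.inr h))]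
  -- the new configuration
  have hnd' : ∀ j, φ (C.lo j) < φ (C.hi j) := fun j =>
    hmono _ _ ⟨j, Or.inl rfl⟩ ⟨j, Or.inr rfl⟩ (C.nondeg j)
  have hdj' : ∀ i j, i ≠ j →
      Set.Ioo (φ (C.lo i)) (φ (C.hi i)) ∩ Set.Ioo (φ (C.lo j)) (φ (C.hi j)) = ∅ := by
    intro i j hne
    rcases C.order hne with h | h
    · have hle := hmono_le _ _ ⟨i, Or.inr rfl⟩ ⟨j, Or.inl rfl⟩ h
      apply Set.eq_empty_of_forall_notMem
      rintro z ⟨⟨-, hz1⟩, ⟨hz2, -⟩⟩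
      linarith
    · have hle := hmono_le _ _ ⟨j, Or.inr rfl⟩ ⟨i, Or.inl rfl⟩ h
      apply Set.eq_empty_of_forall_notMem
      rintro z ⟨⟨hz1, -⟩, ⟨-, hz2⟩⟩
      linarith
  refine ⟨k, ⟨fun j => φ (C.lo j), fun j => φ (C.hi j), C.lab, hnd', hdj'⟩, ?_, ?_⟩
  · -- masses agree
    intro i
    simp only [Config.mass]
    rcases eq_or_ne i A with rfl | hiA
    · have hfil : univ.filter (fun j => C.lab j = i) = {am, ap} := by
        ext j
        simp only [Finset.mem_filter, Finset.mem_univ, true_and, Finset.mem_insert,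
          Finset.mem_singleton]
        constructor
        · exact honlyA j
        · rintro (rfl | rfl)
          · exact hlabam
          · exact hlabap
      rw [hfil, Finset.sum_pair hA, Finset.sum_pair hA]
      simp only [integral_abs']
      rw [vid (C.lo am) (Or.inl na), vid (C.lo ap) (Or.inr (Or.inl ⟨h2, le_rfl⟩)),
        (hZ1 (C.hi am) le_rfl h1).2.2.2.2, (hZ2 (C.hi ap) le_rfl h3).2.2.2.2]
      ring
    rcases eq_or_ne i B with rfl | hiB
    · have hfil : univ.filter (fun j => C.lab j = i) = {bm, bp} := by
        ext j
        simp only [Finset.mem_filter, Finset.mem_univ, true_and, Finset.mem_insert,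
          Finset.mem_singleton]
        constructor
        · exact honlyB j
        · rintro (rfl | rfl)
          · exact hlabbm
          · exact hlabbp
      rw [hfil, Finset.sum_pair hB, Finset.sum_pair hB]
      simp only [integral_abs']
      rw [vid (C.hi bm) (Or.inr (Or.inl ⟨le_rfl, h2⟩)), vid (C.hi bp) (Or.inr (Or.inr le_rfl)),
        (hZ1 (C.lo bm) h1 le_rfl).2.2.2.2, (hZ2 (C.lo bp) h3 le_rfl).2.2.2.2]
      ring
    · apply Finset.sum_congr rfl
      intro j hj
      have hlabj : C.lab j = i := (Finset.mem_filter.mp hj).2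
      have hjam : j ≠ am := by rintro rfl; exact hiA (hlabam ▸ hlabj.symm)
      have hjbm : j ≠ bm := by rintro rfl; exact hiB (hlabbm ▸ hlabj.symm)
      have hjap : j ≠ ap := by rintro rfl; exact hiA (hlabap ▸ hlabj.symm)
      have hjbp : j ≠ bp := by rintro rfl; exact hiB (hlabbp ▸ hlabj.symm)
      have nj := C.nondeg j
      simp only [integral_abs']
      rcases C.order hjam with ho | ho
      · rw [vid (C.lo j) (Or.inl (by linarith)), vid (C.hi j) (Or.inl (by linarith))]
      rcases C.order hjbm with ho2 | ho2
      · rw [(hZ1 (C.lo j) ho (by linarith)).2.2.2.2, (hZ1 (C.hi j) (by linarith) ho2).2.2.2.2]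
        ring
      rcases C.order hjap with ho3 | ho3
      · rw [vid (C.lo j) (Or.inr (Or.inl ⟨ho2, by linarith⟩)),
          vid (C.hi j) (Or.inr (Or.inl ⟨by linarith, ho3⟩))]
      rcases C.order hjbp with ho4 | ho4
      · rw [(hZ2 (C.lo j) ho3 (by linarith)).2.2.2.2, (hZ2 (C.hi j) (by linarith) ho4).2.2.2.2]
        ring
      · rw [vid (C.lo j) (Or.inr (Or.inr ho4)), vid (C.hi j) (Or.inr (Or.inr (by linarith)))]
  · -- perimeter strictly decreases
    have hset : (Config.endpointSet ⟨fun j => φ (C.lo j), fun j => φ (C.hi j), C.lab, hnd', hdj'⟩ :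
        Finset ℝ) = C.endpointSet.image φ := by
      simp only [Config.endpointSet, Finset.image_union, Finset.image_image, Function.comp_def]
    have hEmem : ∀ x ∈ C.endpointSet, (∃ j, C.lo j = x ∨ C.hi j = x) := by
      intro x hx
      simp only [Config.endpointSet, Finset.mem_union, Finset.mem_image, Finset.mem_univ,
        true_and] at hx
      rcases hx with ⟨j, hj⟩ | ⟨j, hj⟩
      · exact ⟨j, Or.inl hj⟩
      · exact ⟨j, Or.inr hj⟩
    have hbmE : C.lo bm ∈ C.endpointSet := by
      simp only [Config.endpointSet, Finset.mem_union, Finset.mem_image, Finset.mem_univ,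
        true_and]
      exact Or.inl ⟨bm, rfl⟩
    calc (Config.perim ⟨fun j => φ (C.lo j), fun j => φ (C.hi j), C.lab, hnd', hdj'⟩ : ℝ)
        = ∑ x ∈ C.endpointSet.image φ, |x| := by rw [Config.perim, hset]
      _ ≤ ∑ x ∈ C.endpointSet, |φ x| := sum_image_le' _ _ _ (fun x => abs_nonneg x)
      _ < ∑ x ∈ C.endpointSet, |x| :=
          Finset.sum_lt_sum (fun x hx => habs x (hEmem x hx))
            ⟨C.lo bm, hbmE, (hZ1 (C.lo bm) h1 le_rfl).2.2.2.1⟩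
      _ = C.perim := rfl
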